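/- Let 𝒳 be a measurable space, H a real Hilbert space, and φ : 𝒳 → H a strongly measurable map satisfying 0 ≤ ⟨φ(x), φ(y)⟩ ≤ 1 for all x, y ∈ 𝒳. Let ε ≥ 0, δ ∈ [0,1], and let P, Q be probability measures on 𝒳 that are (ε,δ)-indistinguishable, i.e., for every measurable set A ⊆ 𝒳 one has P(A) ≤ e^ε·Q(A) + δ and Q(A) ≤ e^ε·P(A) + δ. Then the distance between the mean embeddings satisfies ‖∫ φ dP − ∫ φ dQ‖ ≤ √2·(1 − 2(1−δ)/(1+e^ε)). -/

import Mathlib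

open MeasureTheory
open scoped RealInnerProductSpace

/-- If `P` and `Q` are `(ε,δ)`-indistinguishable probability measures and `φ` is a
strongly measurable feature map with `0 ≤ ⟪φ x, φ y⟫ ≤ 1`, then the distance between
the mean embeddings is at most `√2 · (1 - 2(1-δ)/(1+e^ε))`. -/
theorem mmd_le_of_indistinguishable
    {𝒳 : Type*} [MeasurableSpace 𝒳]
    {H : Type*} [NormedAddCommGroup H] [InnerProductSpace ℝ H] [CompleteSpace H]
    (φ : 𝒳 → H) (hφ : StronglyMeasurable φ)
    (hK0 : ∀ x y : 𝒳, 0 ≤ ⟪φ x, φ y⟫)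
    (hK1 : ∀ x y : 𝒳, ⟪φ x, φ y⟫ ≤ 1)
    (ε δ : ℝ) (hε : 0 ≤ ε) (hδ0 : 0 ≤ δ) (hδ1 : δ ≤ 1)
    (P Q : Measure 𝒳) [IsProbabilityMeasure P] [IsProbabilityMeasure Q]
    (hPQ : ∀ A : Set 𝒳, MeasurableSet A →
      (P A).toReal ≤ Real.exp ε * (Q A).toReal + δ)
    (hQP : ∀ A : Set 𝒳, MeasurableSet A →
      (Q A).toReal ≤ Real.exp ε * (P A).toReal + δ) :
    ‖(∫ x, φ x ∂P) - ∫ x, φ x ∂Q‖ ≤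
      Real.sqrt 2 * (1 - 2 * (1 - δ) / (1 + Real.exp ε)) := by
  -- notation
  set E : ℝ := Real.exp ε with hEdef
  have hE1 : (1 : ℝ) ≤ E := Real.one_le_exp hε
  have hE0 : (0 : ℝ) < 1 + E := by linarith
  set t : ℝ := 1 - 2 * (1 - δ) / (1 + E) with htdef
  have ht_eq : t = (E - 1 + 2 * δ) / (1 + E) := by
    rw [htdef]; field_simp; ring
  have ht0 : 0 ≤ t := by
    rw [ht_eq]
    apply div_nonneg _ hE0.le
    linarith
  -- nonempty
  rcases isEmpty_or_nonempty 𝒳 with hemp | hne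
  · have h1 : P Set.univ = 1 := measure_univ
    rw [Set.univ_eq_empty_iff.mpr hemp, measure_empty] at h1
    exact absurd h1 (by simp)
  -- key claim: P A ≤ Q A + t for all measurable A
  have hsum : ∀ (μ : Measure 𝒳) [IsProbabilityMeasure μ], ∀ A : Set 𝒳, MeasurableSet A →
      (μ A).toReal + (μ Aᶜ).toReal = 1 := by
    intro μ _ A hA
    rw [← ENNReal.toReal_add (measure_ne_top _ _) (measure_ne_top _ _),
      measure_add_measure_compl hA, measure_univ, ENNReal.toReal_one]
  have key : ∀ A : Set 𝒳, MeasurableSet A → (P A).toReal ≤ (Q A).toReal + t := by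
    intro A hA
    have h1 := hPQ A hA
    have h2 := hQP Aᶜ hA.compl
    have hsP := hsum P A hA
    have hsQ := hsum Q A hA
    rw [ht_eq, ← sub_le_iff_le_add', le_div_iff₀ hE0]
    nlinarith [h1, h2, hsP, hsQ]
  -- feature map bounds
  have hnφ : ∀ x, ‖φ x‖ ≤ 1 := by
    intro x
    have h := hK1 x x
    rw [real_inner_self_eq_norm_sq] at h
    nlinarith [norm_nonneg (φ x)]
  have hφintP : Integrable φ P :=
    (integrable_const (1 : ℝ)).mono' hφ.aestronglyMeasurable
      (Filter.Eventually.of_forall fun x => by simpa using hnφ x)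
  have hφintQ : Integrable φ Q :=
    (integrable_const (1 : ℝ)).mono' hφ.aestronglyMeasurable
      (Filter.Eventually.of_forall fun x => by simpa using hnφ x)
  set μv : H := (∫ x, φ x ∂P) - ∫ x, φ x ∂Q with hμv
  set M : ℝ := ‖μv‖ with hM
  have hM0 : 0 ≤ M := norm_nonneg _
  set g : 𝒳 → ℝ := fun x => ⟪μv, φ x⟫ with hg
  have hgsm : StronglyMeasurable g := stronglyMeasurable_const.inner hφ
  have hgb : ∀ x, |g x| ≤ M := fun x =>
    (abs_real_inner_le_norm μv (φ x)).trans
      (by simpa using mul_le_mul_of_nonneg_left (hnφ x) hM0)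
  -- oscillation bound
  have hsqrt2 : ∀ x y : 𝒳, ‖φ x - φ y‖ ≤ Real.sqrt 2 := by
    intro x y
    apply Real.le_sqrt_of_sq_le
    rw [norm_sub_sq_real]
    have h1 := hK1 x x
    have h2 := hK1 y y
    rw [real_inner_self_eq_norm_sq] at h1 h2
    nlinarith [hK0 x y]
  have hosc : ∀ x y : 𝒳, g x - g y ≤ Real.sqrt 2 * M := by
    intro x y
    have : g x - g y = ⟪μv, φ x - φ y⟫ := by rw [inner_sub_right]
    rw [this]
    calc ⟪μv, φ x - φ y⟫ ≤ ‖μv‖ * ‖φ x - φ y‖ := real_inner_le_norm _ _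
      _ ≤ Real.sqrt 2 * M := by
          rw [mul_comm]
          exact mul_le_mul_of_nonneg_right (hsqrt2 x y) hM0
  -- infimum
  have hbdd : BddBelow (Set.range g) := ⟨-M, by rintro _ ⟨x, rfl⟩; linarith [abs_le.mp (hgb x)|>.1]⟩
  set a : ℝ := sInf (Set.range g) with ha
  have hag : ∀ x, a ≤ g x := fun x => csInf_le hbdd ⟨x, rfl⟩
  have hga : ∀ x, g x ≤ a + Real.sqrt 2 * M := by
    intro x
    have : g x - Real.sqrt 2 * M ≤ a :=
      le_csInf (Set.range_nonempty g) (by rintro _ ⟨y, rfl⟩; linarith [hosc x y])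
    linarith
  set c : ℝ := Real.sqrt 2 * M with hc
  have hc0 : 0 ≤ c := mul_nonneg (Real.sqrt_nonneg 2) hM0
  set f : 𝒳 → ℝ := fun x => g x - a with hf
  have hf0 : ∀ x, 0 ≤ f x := fun x => by simp only [hf]; linarith [hag x]
  have hfc : ∀ x, f x ≤ c := fun x => by simp only [hf, hc]; linarith [hga x]
  -- integrability of g and f
  have hgintP : Integrable g P :=
    (integrable_const M).mono' hgsm.aestronglyMeasurable
      (Filter.Eventually.of_forall fun x => by simpa using hgb x)
  have hgintQ : Integrable g Q :=
    (integrable_const M).mono' hgsm.aestronglyMeasurable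
      (Filter.Eventually.of_forall fun x => by simpa using hgb x)
  have hfintP : Integrable f P := hgintP.sub (integrable_const a)
  have hfintQ : Integrable f Q := hgintQ.sub (integrable_const a)
  -- M^2 = ∫ f dP - ∫ f dQ
  have hMsq : M ^ 2 = (∫ x, f x ∂P) - ∫ x, f x ∂Q := by
    have h1 : M ^ 2 = ⟪μv, μv⟫ := (real_inner_self_eq_norm_sq μv).symm
    have h2 : ⟪μv, μv⟫ = (∫ x, g x ∂P) - ∫ x, g x ∂Q := by
      rw [hμv, inner_sub_right, ← integral_inner hφintP, ← integral_inner hφintQ]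
    have h3 : (∫ x, f x ∂P) = (∫ x, g x ∂P) - a := by
      rw [hf, integral_sub hgintP (integrable_const a), integral_const]
      simp
    have h4 : (∫ x, f x ∂Q) = (∫ x, g x ∂Q) - a := by
      rw [hf, integral_sub hgintQ (integrable_const a), integral_const]
      simp
    rw [h1, h2, h3, h4]; ring
  -- layer cake representation
  set F : ℝ → ℝ := fun s => (P {x | s ≤ f x}).toReal with hF
  set G : ℝ → ℝ := fun s => (Q {x | s ≤ f x}).toReal with hG
  have hlcP : (∫ x, f x ∂P) = ∫ s in Set.Ioc 0 c, F s :=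
    hfintP.integral_eq_integral_Ioc_meas_le (Filter.Eventually.of_forall hf0)
      (Filter.Eventually.of_forall hfc)
  have hlcQ : (∫ x, f x ∂Q) = ∫ s in Set.Ioc 0 c, G s :=
    hfintQ.integral_eq_integral_Ioc_meas_le (Filter.Eventually.of_forall hf0)
      (Filter.Eventually.of_forall hfc)
  -- measurability of level sets
  have hlevel : ∀ s : ℝ, MeasurableSet {x | s ≤ f x} :=
    fun s => measurableSet_le measurable_const
      ((hgsm.measurable).sub measurable_const)
  -- integrability of F and G on Ioc 0 c
  have hmeasF : Measurable F := by
    apply Measurable.ennreal_toReal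
    exact Antitone.measurable fun s s' hss' => measure_mono fun x hx => le_trans hss' hx
  have hmeasG : Measurable G := by
    apply Measurable.ennreal_toReal
    exact Antitone.measurable fun s s' hss' => measure_mono fun x hx => le_trans hss' hx
  have hb1 : ∀ (μ : Measure 𝒳) [IsProbabilityMeasure μ], ∀ A : Set 𝒳, (μ A).toReal ≤ 1 := by
    intro μ _ A
    have := ENNReal.toReal_mono (ENNReal.one_ne_top) (prob_le_one (μ := μ) (s := A))
    simpa using this
  have hFint : IntegrableOn F (Set.Ioc 0 c) :=
    (integrableOn_const (C := (1 : ℝ)) measure_Ioc_lt_top.ne).mono'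
      hmeasF.aestronglyMeasurable
      (Filter.Eventually.of_forall fun s => by
        simpa [hF, abs_of_nonneg ENNReal.toReal_nonneg] using hb1 P {x | s ≤ f x})
  have hGint : IntegrableOn G (Set.Ioc 0 c) :=
    (integrableOn_const (C := (1 : ℝ)) measure_Ioc_lt_top.ne).mono'
      hmeasG.aestronglyMeasurable
      (Filter.Eventually.of_forall fun s => by
        simpa [hG, abs_of_nonneg ENNReal.toReal_nonneg] using hb1 Q {x | s ≤ f x})
  -- main estimate
  have hmain : (∫ s in Set.Ioc 0 c, F s) ≤ (∫ s in Set.Ioc 0 c, G s) + t * c := by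
    have hGt : IntegrableOn (fun s => G s + t) (Set.Ioc 0 c) :=
      hGint.add (integrableOn_const measure_Ioc_lt_top.ne)
    have step : (∫ s in Set.Ioc 0 c, F s) ≤ ∫ s in Set.Ioc 0 c, (G s + t) := by
      apply setIntegral_mono_on hFint hGt measurableSet_Ioc
      intro s _
      exact key _ (hlevel s)
    have split : (∫ s in Set.Ioc 0 c, (G s + t)) = (∫ s in Set.Ioc 0 c, G s) + t * c := by
      rw [integral_add hGint (integrableOn_const measure_Ioc_lt_top.ne),
        setIntegral_const]
      rw [measureReal_def, Real.volume_Ioc, smul_eq_mul, mul_comm]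
      congr 1
      rw [ENNReal.toReal_ofReal (by linarith)]
      ring
    linarith [step, split.le, split.ge]
  -- conclude M^2 ≤ t * c
  have hM2 : M ^ 2 ≤ t * c := by
    rw [hMsq, hlcP, hlcQ]; linarith
  -- finish: M ≤ √2 * t
  rcases eq_or_lt_of_le hM0 with h0 | h0
  · rw [← h0]
    positivity
  · rw [hc] at hM2
    nlinarith [hM2, h0]
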